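/- Suppose for every k, |C_k| ≤ n_k ≤ (1+ε)|C_k|, ‖μ̃_k − μ(C_k)‖² ≤ (ε/|C_k|)∑_{x∈C_k}‖x−μ(C_k)‖², σ̃_k² ≥ σ_k², and ln(σ̃_k²) − ln(σ_k²) ≤ ((1+ε)²−1)·(2/(|C_k|d))·OPT(C_k,1), where σ_k² is the empirical variance of C_k and OPT(C_k,1) ≥ |C_k|d/2. Set w̃_k = n_k/∑_l n_l. Then the complete-data negative log-likelihood of the partition {C_k} with parameters {(w̃_k, μ̃_k, σ̃_k²)} is at most (1+ε)⁴ times the optimal complete-data negative log-likelihood ∑_k [OPT(C_k,1) − ln(|C_k|/|X|)|C_k|]. -/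

import Mathlib

open Finset Real

lemma sum_sq_decomp {d : ℕ} (s : Finset (EuclideanSpace ℝ (Fin d))) (hs : s.Nonempty)
    (μ b : EuclideanSpace ℝ (Fin d)) (hμ : μ = ((s.card : ℝ))⁻¹ • ∑ x ∈ s, x) :
    ∑ x ∈ s, ‖x - b‖ ^ 2 = ∑ x ∈ s, ‖x - μ‖ ^ 2 + s.card * ‖b - μ‖ ^ 2 := by
  have hc : (s.card : ℝ) ≠ 0 := by
    exact_mod_cast (Finset.card_pos.mpr hs).ne'
  have hsum : ∑ x ∈ s, (x - μ) = 0 := by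
    rw [Finset.sum_sub_distrib, Finset.sum_const, hμ, ← Nat.cast_smul_eq_nsmul ℝ, smul_smul, mul_inv_cancel₀ hc,
      one_smul, sub_self]
  have key : ∀ x ∈ s, ‖x - b‖ ^ 2
      = ‖x - μ‖ ^ 2 - 2 * (inner ℝ (x - μ) (b - μ) : ℝ) + ‖b - μ‖ ^ 2 := by
    intro x _
    have hx : x - b = (x - μ) - (b - μ) := by abel
    rw [hx, norm_sub_sq_real]
  rw [Finset.sum_congr rfl key, Finset.sum_add_distrib, Finset.sum_sub_distrib,
    Finset.sum_const, ← Finset.mul_sum, ← sum_inner, hsum]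
  simp [nsmul_eq_mul]
open Real
set_option maxHeartbeats 1000000

lemma cluster_bound (ε m d N S St σ2 σt2 OPT n sumn : ℝ)
    (hε0 : 0 ≤ ε) (hε1 : ε ≤ 1)
    (hm : 1 ≤ m) (hd : 1 ≤ d) (hmN : m ≤ N)
    (hS : 0 ≤ S)
    (hσ2 : σ2 = 1 / (m * d) * S)
    (hσ2pos : 0 < σ2)
    (hσt2 : σ2 ≤ σt2)
    (hOPT : OPT = m * d / 2 * (Real.log (2 * π * σ2) + 1))
    (hOPTlb : m * d / 2 ≤ OPT)
    (hlog : Real.log σt2 - Real.log σ2 ≤ ((1 + ε) ^ 2 - 1) * (2 / (m * d)) * OPT)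
    (hSt : St ≤ (1 + ε) * S)
    (hn : m ≤ n)
    (hnsum : n ≤ sumn)
    (hsumn : sumn ≤ n + (1 + ε) * (N - m)) :
    m * d / 2 * Real.log (2 * π * σt2) + 1 / (2 * σt2) * St - m * Real.log (n / sumn)
      ≤ (1 + ε) ^ 4 * (OPT - Real.log (m / N) * m) := by
  have hm0 : (0:ℝ) < m := by linarith
  have hd0 : (0:ℝ) < d := by linarith
  have hmd : (0:ℝ) < m * d := mul_pos hm0 hd0
  have hσt2pos : (0:ℝ) < σt2 := lt_of_lt_of_le hσ2pos hσt2
  have hN0 : (0:ℝ) < N := by linarith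
  have hn0 : (0:ℝ) < n := by linarith
  have hsum0 : (0:ℝ) < sumn := by linarith
  have hπ : (0:ℝ) < 2 * π := by positivity
  -- A : log variance term
  have hA : m * d / 2 * Real.log (2 * π * σt2)
      ≤ m * d / 2 * Real.log (2 * π * σ2) + ((1 + ε) ^ 2 - 1) * OPT := by
    have e1 : Real.log (2 * π * σt2) = Real.log (2 * π) + Real.log σt2 :=
      Real.log_mul hπ.ne' hσt2pos.ne'
    have e2 : Real.log (2 * π * σ2) = Real.log (2 * π) + Real.log σ2 :=
      Real.log_mul hπ.ne' hσ2pos.ne'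
    have h3 : m * d / 2 * (Real.log σt2 - Real.log σ2)
        ≤ m * d / 2 * (((1 + ε) ^ 2 - 1) * (2 / (m * d)) * OPT) := by
      apply mul_le_mul_of_nonneg_left hlog (by positivity)
    have h4 : m * d / 2 * (((1 + ε) ^ 2 - 1) * (2 / (m * d)) * OPT)
        = ((1 + ε) ^ 2 - 1) * OPT := by
      field_simp
    rw [e1, e2]; nlinarith [h3, h4]
  -- B : quadratic term
  have hSval : S = σ2 * (m * d) := by rw [hσ2]; field_simp
  have hB : 1 / (2 * σt2) * St ≤ (1 + ε) * (m * d / 2) := by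
    have h1 : 1 / (2 * σt2) * St ≤ 1 / (2 * σt2) * ((1 + ε) * S) := by
      apply mul_le_mul_of_nonneg_left hSt (by positivity)
    have h2 : 1 / (2 * σt2) * ((1 + ε) * S) ≤ 1 / (2 * σ2) * ((1 + ε) * S) := by
      apply mul_le_mul_of_nonneg_right _ (by positivity)
      apply div_le_div_of_nonneg_left one_pos.le (by positivity) (by linarith)
    have h3 : 1 / (2 * σ2) * ((1 + ε) * S) = (1 + ε) * (m * d / 2) := by
      rw [hSval]; field_simp
    linarith
  -- C : weight term
  have hlogNm : 0 ≤ Real.log (N / m) := Real.log_nonneg (by rw [le_div_iff₀ hm0]; linarith)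
  have hC : - (m * Real.log (n / sumn)) ≤ (1 + ε) * (m * Real.log (N / m)) := by
    have key : Real.log (sumn / n) ≤ (1 + ε) * Real.log (N / m) := by
      have c0 : (0:ℝ) ≤ (1 + ε) * (N - m) := by
        apply mul_nonneg (by linarith) (by linarith)
      have c1 : (0:ℝ) < N + ε * (N - m) := by nlinarith
      have s1 : sumn / n ≤ (m + (1 + ε) * (N - m)) / m := by
        have h1 : sumn / n ≤ (n + (1 + ε) * (N - m)) / n := by gcongr
        refine h1.trans ?_
        rw [div_le_div_iff₀ hn0 hm0]
        nlinarith
      have s2 : Real.log (sumn / n) ≤ Real.log ((m + (1 + ε) * (N - m)) / m) := by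
        apply Real.log_le_log (by positivity) s1
      have s3 : Real.log ((m + (1 + ε) * (N - m)) / m)
          = Real.log (N / m) + Real.log ((N + ε * (N - m)) / N) := by
        rw [← Real.log_mul (div_pos hN0 hm0).ne' (div_pos c1 hN0).ne']
        congr 1; field_simp; ring
      have s4 : Real.log ((N + ε * (N - m)) / N) ≤ ε * (N - m) / N := by
        have h := Real.log_le_sub_one_of_pos (x := (N + ε * (N - m)) / N) (div_pos c1 hN0)
        have e : (N + ε * (N - m)) / N - 1 = ε * (N - m) / N := by field_simp; ring
        linarith
      have s5 : ε * (N - m) / N ≤ ε * Real.log (N / m) := by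
        have hlb : 1 - m / N ≤ Real.log (N / m) := by
          have h := Real.log_le_sub_one_of_pos (x := m / N) (by positivity)
          have h2 : Real.log (N / m) = - Real.log (m / N) := by
            rw [← Real.log_inv, inv_div]
          linarith
        have : ε * (1 - m / N) ≤ ε * Real.log (N / m) :=
          mul_le_mul_of_nonneg_left hlb hε0
        have e : ε * (N - m) / N = ε * (1 - m / N) := by field_simp
        linarith
      linarith
    have e : - Real.log (n / sumn) = Real.log (sumn / n) := by
      rw [← Real.log_inv, inv_div]
    calc - (m * Real.log (n / sumn)) = m * Real.log (sumn / n) := by rw [← e]; ring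
      _ ≤ m * ((1 + ε) * Real.log (N / m)) :=
          mul_le_mul_of_nonneg_left key hm0.le
      _ = (1 + ε) * (m * Real.log (N / m)) := by ring
  -- combine
  have hRHSlog : - Real.log (m / N) * m = m * Real.log (N / m) := by
    have h2 : Real.log (N / m) = - Real.log (m / N) := by
      rw [← Real.log_inv, inv_div]
    rw [h2]; ring
  have hOPT' : m * d / 2 * Real.log (2 * π * σ2) = OPT - m * d / 2 := by
    rw [hOPT]; ring
  have hOPTpos : (0:ℝ) < OPT := lt_of_lt_of_le (by positivity) hOPTlb
  have hε2 : 0 ≤ ε * ε := mul_nonneg hε0 hε0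
  have hε3 : 0 ≤ ε * ε * ε := mul_nonneg hε2 hε0
  have hε4 : 0 ≤ ε * ε * ε * ε := mul_nonneg hε3 hε0
  have h1 : (1 + ε) ^ 2 * OPT + ε * OPT ≤ (1 + ε) ^ 4 * OPT := by
    have key : (0:ℝ) ≤ (ε + 5*(ε*ε) + 4*(ε*ε*ε) + ε*ε*ε*ε) * OPT := by
      apply mul_nonneg (by linarith) hOPTpos.le
    nlinarith [key]
  have hml : 0 ≤ m * Real.log (N / m) := mul_nonneg hm0.le hlogNm
  have h2 : (1 + ε) * (m * Real.log (N / m)) ≤ (1 + ε) ^ 4 * (m * Real.log (N / m)) := by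
    have key : (0:ℝ) ≤ (3*ε + 6*(ε*ε) + 4*(ε*ε*ε) + ε*ε*ε*ε) * (m * Real.log (N / m)) := by
      apply mul_nonneg (by linarith) hml
    nlinarith [key]
  have hεmd : ε * (m * d / 2) ≤ ε * OPT := mul_le_mul_of_nonneg_left hOPTlb hε0
  have hlogmN : Real.log (m / N) = - Real.log (N / m) := by
    rw [← Real.log_inv, inv_div]
  rw [hlogmN]
  linarith [hA, hB, hC, h1, h2, hεmd]

/-- Theorem 3.1 of the paper: approximate weights, means and variances give a
complete-data negative log-likelihood within a `(1+ε)⁴` factor of the optimum. -/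
theorem approx_params_cmle_cost_bound
    {d K : ℕ} (hd : 1 ≤ d)
    (C : Fin K → Finset (EuclideanSpace ℝ (Fin d)))
    (hCne : ∀ k, (C k).Nonempty)
    (N : ℕ) (hN : N = ∑ k, (C k).card)
    (μ : Fin K → EuclideanSpace ℝ (Fin d))
    (hμ : ∀ k, μ k = (((C k).card : ℝ))⁻¹ • ∑ x ∈ C k, x)
    (σ2 : Fin K → ℝ)
    (hσ2 : ∀ k, σ2 k = (1 / (((C k).card : ℝ) * d)) * ∑ x ∈ C k, ‖x - μ k‖ ^ 2)
    (hσ2pos : ∀ k, 0 < σ2 k)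
    (OPT : Fin K → ℝ)
    (hOPT : ∀ k, OPT k = (((C k).card : ℝ) * d / 2) * (Real.log (2 * π * σ2 k) + 1))
    (hOPTlb : ∀ k, ((C k).card : ℝ) * d / 2 ≤ OPT k)
    (ε : ℝ) (hε0 : 0 ≤ ε) (hε1 : ε ≤ 1)
    (n : Fin K → ℝ)
    (hn : ∀ k, ((C k).card : ℝ) ≤ n k ∧ n k ≤ (1 + ε) * ((C k).card : ℝ))
    (w : Fin K → ℝ) (hw : ∀ k, w k = n k / ∑ l, n l)
    (μt : Fin K → EuclideanSpace ℝ (Fin d))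
    (hμt : ∀ k, ‖μt k - μ k‖ ^ 2
        ≤ (ε / ((C k).card : ℝ)) * ∑ x ∈ C k, ‖x - μ k‖ ^ 2)
    (σt2 : Fin K → ℝ) (hσt2 : ∀ k, σ2 k ≤ σt2 k)
    (hσt2log : ∀ k, Real.log (σt2 k) - Real.log (σ2 k)
        ≤ ((1 + ε) ^ 2 - 1) * (2 / (((C k).card : ℝ) * d)) * OPT k) :
    ∑ k, ((((C k).card : ℝ) * d / 2) * Real.log (2 * π * σt2 k)
            + (1 / (2 * σt2 k)) * ∑ x ∈ C k, ‖x - μt k‖ ^ 2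
            - ((C k).card : ℝ) * Real.log (w k))
      ≤ (1 + ε) ^ 4 *
          ∑ k, (OPT k - Real.log (((C k).card : ℝ) / (N : ℝ)) * ((C k).card : ℝ)) := by
  rw [Finset.mul_sum]
  apply Finset.sum_le_sum
  intro k _
  have hcard : ∀ l, (1:ℝ) ≤ ((C l).card : ℝ) := fun l => by
    exact_mod_cast Nat.one_le_iff_ne_zero.mpr (Finset.card_ne_zero_of_mem (hCne l).choose_spec)
  have hnpos : ∀ l, (0:ℝ) ≤ n l := fun l => le_trans (by linarith [hcard l]) (hn l).1
  have hmN : ((C k).card : ℝ) ≤ (N : ℝ) := by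
    have : (C k).card ≤ ∑ l, (C l).card :=
      Finset.single_le_sum (f := fun l => (C l).card) (fun l _ => Nat.zero_le _) (Finset.mem_univ k)
    rw [hN]; exact_mod_cast this
  have hS : (0:ℝ) ≤ ∑ x ∈ C k, ‖x - μ k‖ ^ 2 := by positivity
  have hSt : ∑ x ∈ C k, ‖x - μt k‖ ^ 2 ≤ (1 + ε) * ∑ x ∈ C k, ‖x - μ k‖ ^ 2 := by
    have hdec := sum_sq_decomp (C k) (hCne k) (μ k) (μt k) (hμ k)
    have hb : ((C k).card : ℝ) * ‖μt k - μ k‖ ^ 2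
        ≤ ((C k).card : ℝ) * ((ε / ((C k).card : ℝ)) * ∑ x ∈ C k, ‖x - μ k‖ ^ 2) :=
      mul_le_mul_of_nonneg_left (hμt k) (by linarith [hcard k])
    have he : ((C k).card : ℝ) * ((ε / ((C k).card : ℝ)) * ∑ x ∈ C k, ‖x - μ k‖ ^ 2)
        = ε * ∑ x ∈ C k, ‖x - μ k‖ ^ 2 := by
      have h0 : ((C k).card : ℝ) ≠ 0 := by linarith [hcard k]
      field_simp
    linarith [hdec, hb]
  have hnsum : n k ≤ ∑ l, n l :=
    Finset.single_le_sum (fun l _ => hnpos l) (Finset.mem_univ k)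
  have hsumn : ∑ l, n l ≤ n k + (1 + ε) * ((N : ℝ) - ((C k).card : ℝ)) := by
    have e1 : n k + ∑ l ∈ Finset.univ.erase k, n l = ∑ l, n l :=
      Finset.add_sum_erase _ n (Finset.mem_univ k)
    have e2 : (((C k).card : ℝ)) + ∑ l ∈ Finset.univ.erase k, ((C l).card : ℝ)
        = (N : ℝ) := by
      rw [hN]; push_cast
      exact Finset.add_sum_erase _ (fun l => ((C l).card : ℝ)) (Finset.mem_univ k)
    have e3 : ∑ l ∈ Finset.univ.erase k, n l
        ≤ ∑ l ∈ Finset.univ.erase k, (1 + ε) * ((C l).card : ℝ) :=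
      Finset.sum_le_sum (fun l _ => (hn l).2)
    have e4 : ∑ l ∈ Finset.univ.erase k, (1 + ε) * ((C l).card : ℝ)
        = (1 + ε) * ((N:ℝ) - ((C k).card : ℝ)) := by
      rw [← Finset.mul_sum, show (∑ l ∈ Finset.univ.erase k, ((C l).card : ℝ))
        = (N:ℝ) - ((C k).card : ℝ) by linarith [e2]]
    linarith [e1, e3, e4]
  rw [hw k]
  exact cluster_bound ε ((C k).card : ℝ) (d : ℝ) (N : ℝ)
    (∑ x ∈ C k, ‖x - μ k‖ ^ 2) (∑ x ∈ C k, ‖x - μt k‖ ^ 2)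
    (σ2 k) (σt2 k) (OPT k) (n k) (∑ l, n l)
    hε0 hε1 (hcard k) (by exact_mod_cast hd) hmN hS (hσ2 k) (hσ2pos k) (hσt2 k)
    (hOPT k) (hOPTlb k) (hσt2log k) hSt (hn k).1 hnsum hsumn
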